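/- Let E be a real Hilbert space, f_1,…,f_M : E → ℝ convex differentiable, and g : E → ℝ convex and lower semicontinuous. Let γ_1,…,γ_M > 0, π_i = (1/γ_i)/Σ_{j=1}^M (1/γ_j), and γ = M/Σ_{j=1}^M (1/γ_j). If x⋆ minimizes F = (1/M)Σ_{i=1}^M f_i + g over E, then, setting x̄⋆ = Σ_{i=1}^M π_i (x⋆ − γ_i ∇f_i(x⋆)), the point x⋆ is a minimizer of z ↦ g(z) + ‖z − x̄⋆‖²/(2γ); that is, x⋆ = prox_{γg}(x̄⋆). -/

import Mathlib

open RealInnerProductSpace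

/-- fixed-point characterization of a minimizer of
`F = (1/M) Σ fᵢ + g`: with `x̄⋆ = Σ πᵢ (x⋆ − γᵢ ∇fᵢ(x⋆))`, the minimizer `x⋆`
minimizes `z ↦ g(z) + ‖z − x̄⋆‖²/(2γ)`, i.e. `x⋆ = prox_{γg}(x̄⋆)`. -/
theorem dave_rpg_fixed_point_is_prox
    {E : Type*} [NormedAddCommGroup E] [InnerProductSpace ℝ E] [CompleteSpace E]
    (M : ℕ) (hM : 1 ≤ M)
    (f : Fin M → E → ℝ) (f' : Fin M → E → E)
    (hconv : ∀ i, ConvexOn ℝ Set.univ (f i))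
    (hdiff : ∀ i x, HasGradientAt (f i) (f' i x) x)
    (g : E → ℝ) (hgconv : ConvexOn ℝ Set.univ g) (hglsc : LowerSemicontinuous g)
    (γi : Fin M → ℝ) (hγi : ∀ i, 0 < γi i)
    (π : Fin M → ℝ) (hπ : ∀ i, π i = (1 / γi i) / ∑ j, 1 / γi j)
    (γ : ℝ) (hγdef : γ = (M : ℝ) / ∑ j, 1 / γi j)
    (xstar : E)
    (hmin : ∀ y, (1 / (M : ℝ)) * ∑ i, f i xstar + g xstar ≤
      (1 / (M : ℝ)) * ∑ i, f i y + g y)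
    (xbarstar : E) (hxbarstar : xbarstar = ∑ i, π i • (xstar - γi i • f' i xstar)) :
    ∀ z, g xstar + ‖xstar - xbarstar‖ ^ 2 / (2 * γ) ≤
      g z + ‖z - xbarstar‖ ^ 2 / (2 * γ) := by
  intro z
  have hMpos : (0:ℝ) < M := by exact_mod_cast hM
  set S : ℝ := ∑ j, 1 / γi j with hS
  have hSpos : 0 < S := Finset.sum_pos (fun j _ => one_div_pos.mpr (hγi j)) (by simp [Finset.univ_nonempty_iff]; exact Fin.pos_iff_nonempty.mp hM)
  have hγpos : 0 < γ := by rw [hγdef]; exact div_pos hMpos hSpos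
  set u : E := z - xstar with hu
  set v : E := (1/(M:ℝ)) • ∑ i, f' i xstar with hv
  -- Step 1: xstar - xbarstar = γ • v
  have hkey : xstar - xbarstar = γ • v := by
    have hπsum : ∑ i, π i = 1 := by
      simp only [hπ, div_eq_mul_inv, ← Finset.sum_mul]
      field_simp
      exact hS.symm
    have : xbarstar = (∑ i, π i) • xstar - ∑ i, (π i * γi i) • f' i xstar := by
      rw [hxbarstar, Finset.sum_smul, ← Finset.sum_sub_distrib]
      congr 1; ext i
      rw [smul_sub, smul_smul]
    rw [this, hπsum, one_smul]
    have hπγ : ∀ i, π i * γi i = γ / M := by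
      intro i
      rw [hπ i, hγdef]
      field_simp [(hγi i).ne', hSpos.ne']
    simp only [hπγ]
    rw [hv, ← Finset.smul_sum, smul_smul, sub_sub_cancel]
    congr 1
    field_simp
  -- Step 2: subgradient inequality: ⟪v, u⟫ + (g z - g xstar) ≥ 0
  have hsub : 0 ≤ ⟪v, u⟫ + (g z - g xstar) := by
    -- derivative of ψ t = (1/M) * ∑ f i (xstar + t • u) at 0 is ⟪v, u⟫
    set ψ : ℝ → ℝ := fun t => (1/(M:ℝ)) * ∑ i, f i (xstar + t • u) with hψ
    have hcurve : HasDerivAt (fun t : ℝ => xstar + t • u) u 0 := by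
      simpa using ((hasDerivAt_id (0:ℝ)).smul_const u).const_add xstar
    have hderiv : HasDerivAt ψ (⟪v, u⟫) 0 := by
      have h1 : ∀ i : Fin M, HasDerivAt (fun t : ℝ => f i (xstar + t • u))
          (⟪f' i xstar, u⟫) 0 := by
        intro i
        have := HasFDerivAt.comp_hasDerivAt 0
          (by simpa using (hdiff i xstar).hasFDerivAt) hcurve
        simpa [InnerProductSpace.toDual_apply_apply, Function.comp_def] using this
      have hsum := HasDerivAt.fun_sum (u := (Finset.univ : Finset (Fin M)))
        (fun i _ => h1 i)
      have := hsum.const_mul (1/(M:ℝ))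
      refine this.congr_deriv ?_
      rw [hv, real_inner_smul_left, sum_inner]
    have htend : Filter.Tendsto (slope ψ 0) (nhdsWithin 0 (Set.Ioi 0)) (nhds (⟪v, u⟫)) :=
      (hasDerivAt_iff_tendsto_slope.mp hderiv).mono_left
        (nhdsWithin_mono 0 (fun t ht => ne_of_gt ht))
    have hbound : ∀ᶠ t in nhdsWithin (0:ℝ) (Set.Ioi 0), -(g z - g xstar) ≤ slope ψ 0 t := by
      filter_upwards [Ioo_mem_nhdsGT_of_mem (by norm_num : (0:ℝ) ∈ Set.Ico 0 1)]
        with t ht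
      obtain ⟨ht0, ht1⟩ := ht
      have hconvg : g (xstar + t • u) ≤ (1 - t) * g xstar + t * g z := by
        have heq : xstar + t • u = (1-t) • xstar + t • z := by rw [hu]; module
        rw [heq]
        simpa using hgconv.2 (Set.mem_univ xstar) (Set.mem_univ z)
          (by linarith : (0:ℝ) ≤ 1 - t) ht0.le (by ring)
      have hmint := hmin (xstar + t • u)
      have hψle : ψ 0 - ψ t ≤ t * (g z - g xstar) := by
        have : ψ 0 + g xstar ≤ ψ t + g (xstar + t • u) := by
          simpa [hψ] using hmint
        nlinarith
      rw [slope_def_field]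
      rw [div_eq_inv_mul]
      have : -(t * (g z - g xstar)) ≤ ψ t - ψ 0 := by linarith
      have h2 : -(g z - g xstar) ≤ (ψ t - ψ 0) / t := by
        rw [le_div_iff₀ ht0]; nlinarith
      simpa [div_eq_inv_mul, sub_zero] using h2
    have := ge_of_tendsto htend hbound
    linarith
  -- Step 3: algebra
  have hz : z - xbarstar = u + γ • v := by rw [hu, ← hkey]; abel
  have hls : ‖xstar - xbarstar‖ ^ 2 = γ ^ 2 * ‖v‖ ^ 2 := by
    rw [hkey, norm_smul, Real.norm_eq_abs, abs_of_pos hγpos]; ring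
  have hrs : ‖z - xbarstar‖ ^ 2 = ‖u‖ ^ 2 + 2 * γ * ⟪u, v⟫ + γ ^ 2 * ‖v‖ ^ 2 := by
    rw [hz, norm_add_sq_real, real_inner_smul_right, norm_smul, Real.norm_eq_abs,
      abs_of_pos hγpos]; ring
  have hn : (0:ℝ) ≤ ‖u‖ ^ 2 / (2 * γ) := by positivity
  have key : (‖u‖ ^ 2 + 2 * γ * ⟪u, v⟫ + γ ^ 2 * ‖v‖ ^ 2) / (2 * γ)
      - γ ^ 2 * ‖v‖ ^ 2 / (2 * γ) = ‖u‖ ^ 2 / (2 * γ) + ⟪u, v⟫ := by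
    field_simp; ring
  have hinner : (⟪u, v⟫ : ℝ) = ⟪v, u⟫ := real_inner_comm v u
  rw [hls, hrs]
  linarith [key, hn, hinner ▸ hsub]
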